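/- Let k > ℓ ≥ 2 be integers and μ = ±1. Then S(2^k, μ2^ℓ) consists precisely of the tuples (B₁, C₁, B₂, C₂) of the form B₁ = 2^i b₁, B₂ = 2^j b₂, with C₁ the unique integer determined by 2^kC₂ + 4B₁B₂ + C₁μ2^ℓ = 0, where: 0 ≤ i < k and 0 ≤ j < ℓ with i + j = ℓ − 2; 0 ≤ μC₂ < 2^{ℓ+2} with C₂ ≡ −1 (mod 4); 0 ≤ b₁ < 2^{k−i} with b₁ odd; 0 ≤ μb₂ < 2^{ℓ−j} with b₂ odd; and b₁b₂ ≡ μ + 2^{k−ℓ} (mod 4). Moreover S(2^k, μ2^ℓ) is empty when ℓ ∈ {0,1}. -/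

import Mathlib

/-- The set `S(A₁,A₂)` of normalized tuples `(B₁,C₁,B₂,C₂)` satisfying
`A₁C₂ + 4B₁B₂ + C₁A₂ = 0`, the gcd conditions, `Cᵢ ≡ -1 (mod 4)` and the
normalization inequalities. -/
def PlSet (A₁ A₂ : ℤ) : Set (ℤ × ℤ × ℤ × ℤ) :=
  {v | A₁ * v.2.2.2 + 4 * v.1 * v.2.2.1 + v.2.1 * A₂ = 0 ∧
    Int.gcd A₁ (Int.gcd v.1 v.2.1) = 1 ∧
    Int.gcd A₂ (Int.gcd v.2.2.1 v.2.2.2) = 1 ∧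
    v.2.1 ≡ -1 [ZMOD 4] ∧ v.2.2.2 ≡ -1 [ZMOD 4] ∧
    0 ≤ (v.1 : ℚ) / (A₁ : ℚ) ∧ (v.1 : ℚ) / (A₁ : ℚ) < 1 ∧
    0 ≤ (v.2.2.1 : ℚ) / (A₂ : ℚ) ∧ (v.2.2.1 : ℚ) / (A₂ : ℚ) < 1 ∧
    0 ≤ (v.2.2.2 : ℚ) / (4 * (A₂ : ℚ)) ∧ (v.2.2.2 : ℚ) / (4 * (A₂ : ℚ)) < 1}

lemma aux_odd_of_mod4 (C : ℤ) (h : C ≡ -1 [ZMOD 4]) : Odd C := by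
  have := h.dvd
  rw [Int.odd_iff]; omega

lemma aux_exists_two_pow (x : ℤ) (hx : x ≠ 0) : ∃ i : ℕ, ∃ b : ℤ, Odd b ∧ x = 2^i * b := by
  obtain ⟨b, h, hb⟩ := FiniteMultiplicity.exists_eq_pow_mul_and_not_dvd
    ((Int.finiteMultiplicity_iff (a := 2) (b := x)).mpr ⟨by decide, hx⟩)
  refine ⟨_, b, ?_, h⟩
  rw [Int.odd_iff]; omega

lemma aux_pow2_eq (m n : ℕ) (u v : ℤ) (hu : Odd u) (hv : Odd v)
    (h : 2^m * u = 2^n * v) : m = n ∧ u = v := by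
  have key : ∀ m n : ℕ, ∀ u v : ℤ, Odd u → Odd v → 2^m * u = 2^n * v → m ≤ n → m = n := by
    intro m n u v hu hv h hle
    by_contra hne
    have h1 : (2:ℤ)^m * u = 2^m * (2^(n-m) * v) := by
      rw [h, ← mul_assoc, ← pow_add]; congr 2; omega
    have h2 : u = 2^(n-m) * v :=
      mul_left_cancel₀ (a := (2:ℤ)^m) (by positivity) h1
    have : (2:ℤ) ∣ u := h2 ▸ Dvd.dvd.mul_right (dvd_pow_self 2 (by omega : n - m ≠ 0)) v
    rw [Int.odd_iff] at hu; omega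
  have hmn : m = n := by
    rcases le_total m n with hle | hle
    · exact key m n u v hu hv h hle
    · exact (key n m v u hv hu h.symm hle).symm
  subst hmn
  exact ⟨rfl, mul_left_cancel₀ (a := (2:ℤ)^m) (by positivity) h⟩

lemma aux_gcd_eq_one (m : ℕ) (a B C : ℤ) (haz : a.natAbs = 2^m) (hC : Odd C) :
    Int.gcd a (Int.gcd B C) = 1 := by
  set g := Int.gcd a (Int.gcd B C) with hg
  have hga : (g:ℤ) ∣ a := Int.gcd_dvd_left _ _
  have hgC : (g:ℤ) ∣ C := dvd_trans (Int.gcd_dvd_right _ _) (Int.gcd_dvd_right _ _)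
  have h2 : ¬ (2 ∣ g) := by
    intro h
    have : (2:ℤ) ∣ C := dvd_trans (by exact_mod_cast Int.natCast_dvd_natCast.mpr h) hgC
    rw [Int.odd_iff] at hC; omega
  have hgn : g ∣ 2^m := by
    rw [← haz]
    exact Int.natAbs_dvd_natAbs.mpr hga
  have hco : Nat.Coprime g 2 := ((Nat.Prime.coprime_iff_not_dvd Nat.prime_two).mpr h2).symm
  exact (hco.pow_right m).eq_one_of_dvd hgn

lemma aux_unscale (c x y : ℤ) (hc : 0 < c) (h0 : 0 ≤ c * x) (hlt : c * x < c * y) :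
    0 ≤ x ∧ x < y := by
  constructor
  · have h1 : c * 0 ≤ c * x := by linarith
    simpa using le_of_mul_le_mul_left h1 hc
  · exact lt_of_mul_lt_mul_left hlt (le_of_lt hc)

lemma aux_ineq_iff (a x : ℤ) (ha : 0 < a) :
    (0 ≤ (x:ℚ)/(a:ℚ) ∧ (x:ℚ)/(a:ℚ) < 1) ↔ (0 ≤ x ∧ x < a) := by
  have ha' : (0:ℚ) < (a:ℚ) := by exact_mod_cast ha
  rw [le_div_iff₀ ha', zero_mul, div_lt_one ha']
  exact ⟨fun ⟨h1,h2⟩ => ⟨by exact_mod_cast h1, by exact_mod_cast h2⟩,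
    fun ⟨h1,h2⟩ => ⟨by exact_mod_cast h1, by exact_mod_cast h2⟩⟩

lemma aux_ineq_iff_mu (μ : ℤ) (hμ : μ = 1 ∨ μ = -1) (a x : ℤ) (ha : 0 < a) :
    (0 ≤ (x:ℚ)/((μ * a : ℤ):ℚ) ∧ (x:ℚ)/((μ * a : ℤ):ℚ) < 1) ↔ (0 ≤ μ*x ∧ μ*x < a) := by
  have hrw : (x:ℚ)/((μ * a : ℤ):ℚ) = ((μ*x : ℤ):ℚ)/((a:ℤ):ℚ) := by
    rcases hμ with rfl | rfl
    · push_cast; ring_nf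
    · push_cast
      rw [neg_one_mul, neg_one_mul, div_neg, neg_div]
  rw [hrw]
  exact aux_ineq_iff a (μ*x) ha

/-- Explicit description of `S(2^k, μ2^ℓ)` for `k > ℓ ≥ 2`, and its emptiness
for `ℓ ∈ {0,1}`. -/
theorem plset_two_power_description (k ℓ : ℕ) (hkℓ : ℓ < k)
    (μ : ℤ) (hμ : μ = 1 ∨ μ = -1) :
    (2 ≤ ℓ → ∀ B₁ C₁ B₂ C₂ : ℤ,
      (B₁, C₁, B₂, C₂) ∈ PlSet ((2 : ℤ) ^ k) (μ * (2 : ℤ) ^ ℓ) ↔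
        (C₁ * (μ * (2 : ℤ) ^ ℓ) = -((2 : ℤ) ^ k * C₂ + 4 * B₁ * B₂) ∧
          ∃ i j : ℕ, ∃ b₁ b₂ : ℤ, i < k ∧ j < ℓ ∧ i + j = ℓ - 2 ∧
            B₁ = (2 : ℤ) ^ i * b₁ ∧ B₂ = (2 : ℤ) ^ j * b₂ ∧
            0 ≤ μ * C₂ ∧ μ * C₂ < (2 : ℤ) ^ (ℓ + 2) ∧ C₂ ≡ -1 [ZMOD 4] ∧
            0 ≤ b₁ ∧ b₁ < (2 : ℤ) ^ (k - i) ∧ Odd b₁ ∧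
            0 ≤ μ * b₂ ∧ μ * b₂ < (2 : ℤ) ^ (ℓ - j) ∧ Odd b₂ ∧
            b₁ * b₂ ≡ μ + (2 : ℤ) ^ (k - ℓ) [ZMOD 4])) ∧
    ((ℓ = 0 ∨ ℓ = 1) → PlSet ((2 : ℤ) ^ k) (μ * (2 : ℤ) ^ ℓ) = ∅) := by
  have hμodd : Odd μ := by rcases hμ with rfl | rfl <;> decide
  have hμ2 : μ * μ = 1 := by rcases hμ with rfl | rfl <;> norm_num
  have hkl : (2:ℤ)^k = 2^ℓ * 2^(k-ℓ) := by rw [← pow_add]; congr 1; omega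
  constructor
  · intro hℓ B₁ C₁ B₂ C₂
    have hden : (4:ℚ) * ((μ * 2^ℓ : ℤ):ℚ) = ((μ * 2^(ℓ+2) : ℤ):ℚ) := by push_cast; ring
    constructor
    · rintro ⟨heq, -, -, hC₁, hC₂, h1, h2, h3, h4, h5, h6⟩
      have hC₁odd : Odd C₁ := aux_odd_of_mod4 _ hC₁
      have hC₂odd : Odd C₂ := aux_odd_of_mod4 _ hC₂
      have hB₁r : 0 ≤ B₁ ∧ B₁ < 2^k := (aux_ineq_iff (2^k) B₁ (by positivity)).mp ⟨h1, h2⟩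
      have hB₂r : 0 ≤ μ*B₂ ∧ μ*B₂ < 2^ℓ :=
        (aux_ineq_iff_mu μ hμ (2^ℓ) B₂ (by positivity)).mp ⟨h3, h4⟩
      rw [hden] at h5 h6
      have hC₂r : 0 ≤ μ*C₂ ∧ μ*C₂ < 2^(ℓ+2) :=
        (aux_ineq_iff_mu μ hμ (2^(ℓ+2)) C₂ (by positivity)).mp ⟨h5, h6⟩
      -- main equation rearranged
      have hD : 4 * B₁ * B₂ = 2^ℓ * (-((2:ℤ)^(k-ℓ)*C₂ + C₁*μ)) := by
        rw [hkl] at heq; linear_combination heq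
      have hWodd : Odd (-((2:ℤ)^(k-ℓ)*C₂ + C₁*μ)) := by
        have he : Even ((2:ℤ)^(k-ℓ)*C₂) := by
          have : (2:ℤ)^(k-ℓ) = 2 * 2^(k-ℓ-1) := by
            rw [← pow_succ']; congr 1; omega
          rw [this, mul_assoc]
          exact even_two_mul _
        exact (he.add_odd (hC₁odd.mul hμodd)).neg
      have hWne : (-((2:ℤ)^(k-ℓ)*C₂ + C₁*μ)) ≠ 0 := by
        rw [Int.odd_iff] at hWodd; omega
      have hBne : B₁ ≠ 0 ∧ B₂ ≠ 0 := by
        have hne : 4 * B₁ * B₂ ≠ 0 := by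
          rw [hD]; exact mul_ne_zero (by positivity) hWne
        constructor <;> intro h <;> rw [h] at hne <;> simp at hne
      obtain ⟨i, b₁, hb₁odd, hB₁eq⟩ := aux_exists_two_pow B₁ hBne.1
      obtain ⟨j, b₂, hb₂odd, hB₂eq⟩ := aux_exists_two_pow B₂ hBne.2
      have hD2 : (2:ℤ)^(i+j+2) * (b₁*b₂) = 2^ℓ * (-((2:ℤ)^(k-ℓ)*C₂ + C₁*μ)) := by
        rw [hB₁eq, hB₂eq] at hD; linear_combination hD
      obtain ⟨hije, hbbe⟩ := aux_pow2_eq _ _ _ _ (hb₁odd.mul hb₂odd) hWodd hD2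
      have h2i : (0:ℤ) < 2^i := by positivity
      have h2j : (0:ℤ) < 2^j := by positivity
      have hb₁r : 0 ≤ b₁ ∧ b₁ < 2^(k-i) := by
        refine aux_unscale ((2:ℤ)^i) b₁ (2^(k-i)) h2i ?_ ?_
        · rw [← hB₁eq]; exact hB₁r.1
        · rw [← pow_add, show i + (k-i) = k by omega, ← hB₁eq]; exact hB₁r.2
      have hb₂r : 0 ≤ μ * b₂ ∧ μ * b₂ < 2^(ℓ-j) := by
        refine aux_unscale ((2:ℤ)^j) (μ*b₂) (2^(ℓ-j)) h2j ?_ ?_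
        · have := hB₂r.1; rw [hB₂eq] at this; linarith [this]
        · rw [← pow_add, show j + (ℓ-j) = ℓ by omega]
          have := hB₂r.2; rw [hB₂eq] at this; linarith [this]
      refine ⟨by linear_combination heq, i, j, b₁, b₂, by omega, by omega, by omega,
        hB₁eq, hB₂eq, hC₂r.1, hC₂r.2, hC₂, hb₁r.1, hb₁r.2, hb₁odd,
        hb₂r.1, hb₂r.2, hb₂odd, ?_⟩
      · rw [hbbe]
        have ha : (2:ℤ)^(k-ℓ)*C₂ ≡ 2^(k-ℓ) * (-1) [ZMOD 4] := hC₂.mul_left _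
        have hb : C₁*μ ≡ (-1)*μ [ZMOD 4] := hC₁.mul_right μ
        calc -((2:ℤ)^(k-ℓ)*C₂ + C₁*μ) ≡ -((2:ℤ)^(k-ℓ)*(-1) + (-1)*μ) [ZMOD 4] :=
              (ha.add hb).neg
          _ = μ + 2^(k-ℓ) := by ring
    · rintro ⟨hC₁eq, i, j, b₁, b₂, hik, hjl, hij, hB₁eq, hB₂eq, hC₂0, hC₂lt, hC₂mod,
        hb₁0, hb₁lt, hb₁odd, hb₂0, hb₂lt, hb₂odd, hcong⟩
      have hl2 : i + j + 2 = ℓ := by omega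
      have hC₂odd : Odd C₂ := aux_odd_of_mod4 _ hC₂mod
      have key : C₁ * μ = -((2:ℤ)^(k-ℓ)*C₂ + b₁*b₂) := by
        apply mul_right_cancel₀ (b := (2:ℤ)^ℓ) (by positivity)
        have hlp : (2:ℤ)^ℓ = 2^(i+j+2) := by rw [hl2]
        rw [hB₁eq, hB₂eq] at hC₁eq
        linear_combination hC₁eq - C₂ * hkl + (b₁*b₂) * hlp
      have hC₁mod : C₁ ≡ -1 [ZMOD 4] := by
        have ha : (2:ℤ)^(k-ℓ)*C₂ ≡ 2^(k-ℓ) * (-1) [ZMOD 4] := hC₂mod.mul_left _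
        have h3 : C₁ * μ ≡ -μ [ZMOD 4] := by
          calc C₁ * μ = -((2:ℤ)^(k-ℓ)*C₂ + b₁*b₂) := key
            _ ≡ -((2:ℤ)^(k-ℓ)*(-1) + (μ + 2^(k-ℓ))) [ZMOD 4] := (ha.add hcong).neg
            _ = -μ := by ring
        calc C₁ = C₁ * μ * μ := by rw [mul_assoc, hμ2, mul_one]
          _ ≡ -μ * μ [ZMOD 4] := h3.mul_right μ
          _ = -1 := by rw [neg_mul, hμ2]
      have hC₁odd : Odd C₁ := aux_odd_of_mod4 _ hC₁mod
      have h2i : (0:ℤ) < 2^i := by positivity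
      have h2j : (0:ℤ) < 2^j := by positivity
      have hB₁r : 0 ≤ (B₁:ℚ)/(((2:ℤ)^k : ℤ):ℚ) ∧ (B₁:ℚ)/(((2:ℤ)^k : ℤ):ℚ) < 1 := by
        refine (aux_ineq_iff (2^k) B₁ (by positivity)).mpr ⟨?_, ?_⟩
        · rw [hB₁eq]; exact mul_nonneg (le_of_lt h2i) hb₁0
        · rw [hB₁eq]
          calc (2:ℤ)^i * b₁ < 2^i * 2^(k-i) := mul_lt_mul_of_pos_left hb₁lt h2i
            _ = 2^k := by rw [← pow_add]; congr 1; omega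
      have hB₂r : 0 ≤ (B₂:ℚ)/((μ * 2^ℓ : ℤ):ℚ) ∧ (B₂:ℚ)/((μ * 2^ℓ : ℤ):ℚ) < 1 := by
        refine (aux_ineq_iff_mu μ hμ (2^ℓ) B₂ (by positivity)).mpr ⟨?_, ?_⟩
        · rw [hB₂eq, show μ * ((2:ℤ)^j * b₂) = 2^j * (μ * b₂) by ring]
          exact mul_nonneg (le_of_lt h2j) hb₂0
        · rw [hB₂eq, show μ * ((2:ℤ)^j * b₂) = 2^j * (μ * b₂) by ring]
          calc (2:ℤ)^j * (μ * b₂) < 2^j * 2^(ℓ-j) := mul_lt_mul_of_pos_left hb₂lt h2j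
            _ = 2^ℓ := by rw [← pow_add]; congr 1; omega
      have hC₂r : 0 ≤ (C₂:ℚ)/((μ * 2^(ℓ+2) : ℤ):ℚ) ∧ (C₂:ℚ)/((μ * 2^(ℓ+2) : ℤ):ℚ) < 1 :=
        (aux_ineq_iff_mu μ hμ (2^(ℓ+2)) C₂ (by positivity)).mpr ⟨hC₂0, hC₂lt⟩
      refine ⟨by linear_combination hC₁eq, ?_, ?_, hC₁mod, hC₂mod,
        hB₁r.1, hB₁r.2, hB₂r.1, hB₂r.2, ?_, ?_⟩
      · exact aux_gcd_eq_one k _ B₁ C₁ (by rw [Int.natAbs_pow]; rfl) hC₁odd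
      · exact aux_gcd_eq_one ℓ _ B₂ C₂
          (by rw [Int.natAbs_mul]; rcases hμ with rfl | rfl <;> simp [Int.natAbs_pow]) hC₂odd
      · rw [hden]; exact hC₂r.1
      · rw [hden]; exact hC₂r.2
  · rintro (rfl | rfl) <;> ext ⟨B₁, C₁, B₂, C₂⟩ <;>
      simp only [PlSet, Set.mem_setOf_eq, Set.mem_empty_iff_false, iff_false, not_and] <;>
      intro heq hg1 hg2 hC₁ <;> intro _ <;> exfalso
    · have hC₁odd : Odd (C₁ * μ) := (aux_odd_of_mod4 _ hC₁).mul hμodd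
      have hk1 : (2:ℤ)^k = 2 * 2^(k-1) := by rw [← pow_succ']; congr 1; omega
      have hE : C₁ * μ = -(2*(2^(k-1)*C₂) + 4*(B₁*B₂)) := by
        rw [hk1] at heq; linear_combination heq
      rw [Int.odd_iff] at hC₁odd
      set X := (2:ℤ)^(k-1)*C₂ with hX
      set Y := B₁*B₂ with hY
      set Z := C₁ * μ with hZ
      omega
    · have hC₁odd : Odd (C₁ * μ) := (aux_odd_of_mod4 _ hC₁).mul hμodd
      have hk2 : (2:ℤ)^k = 4 * 2^(k-2) := by
        rw [show (4:ℤ) = 2^2 by norm_num, ← pow_add]; congr 1; omega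
      have hE : 2 * (C₁ * μ) = -(4*(2^(k-2)*C₂) + 4*(B₁*B₂)) := by
        rw [hk2] at heq; linear_combination heq
      rw [Int.odd_iff] at hC₁odd
      set X := (2:ℤ)^(k-2)*C₂ with hX
      set Y := B₁*B₂ with hY
      set Z := C₁ * μ with hZ
      omega
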